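/- arXiv:2502.07977 — 3 statements merged into one kernel-verified Lean document; each statement's English description precedes it below -/
import Mathlib

section
/- Let Y(t₀), Y(t₀+1), …, Y(t) be row stochastic M×M real matrices and let γ ∈ (0,1]. Suppose there exist k pairwise disjoint intervals of consecutive indices contained in [t₀, t] such that, for each interval, the ordered product of the matrices Y over that interval has coefficient of ergodicity λ at most 1 − γ. Then δ(Y(t)·Y(t−1)·⋯·Y(t₀)) ≤ (1 − γ)^k. -/
/-- A square real matrix is row stochastic if all its entries are nonnegative and
each of its rows sums to 1. -/
def RowStochastic {M : ℕ} (A : Matrix (Fin M) (Fin M) ℝ) : Prop :=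
  (∀ i j, 0 ≤ A i j) ∧ ∀ i, ∑ j, A i j = 1

/-- Coefficient of ergodicity `δ(A) = max_j max_{i₁,i₂} |A_{i₁ j} − A_{i₂ j}|`. -/
noncomputable def ergDelta {M : ℕ} (A : Matrix (Fin M) (Fin M) ℝ) : ℝ :=
  ⨆ j, ⨆ i₁, ⨆ i₂, |A i₁ j - A i₂ j|

/-- Coefficient of ergodicity `λ(A) = 1 − min_{i₁,i₂} ∑_j min(A_{i₁ j}, A_{i₂ j})`. -/
noncomputable def ergLambda {M : ℕ} (A : Matrix (Fin M) (Fin M) ℝ) : ℝ :=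
  1 - ⨅ i₁, ⨅ i₂, ∑ j, min (A i₁ j) (A i₂ j)

/-- Backward product `Y(b)·Y(b−1)·⋯·Y(a)` of the matrices `Y` over the interval of
indices `[a, b]` (taken in decreasing index order). -/
noncomputable def backProd {M : ℕ} (Y : ℕ → Matrix (Fin M) (Fin M) ℝ) (a b : ℕ) :
    Matrix (Fin M) (Fin M) ℝ :=
  (((List.range (b + 1 - a)).map fun i => Y (a + i)).reverse).prod

section Aux
variable {M : ℕ}

lemma aux_bddA (f : Fin M → ℝ) : BddAbove (Set.range f) := (Set.finite_range f).bddAbove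
lemma aux_bddB (f : Fin M → ℝ) : BddBelow (Set.range f) := (Set.finite_range f).bddBelow

lemma ergDelta_le_of (hM : 0 < M) {A : Matrix (Fin M) (Fin M) ℝ} {C : ℝ}
    (h : ∀ j i₁ i₂, |A i₁ j - A i₂ j| ≤ C) : ergDelta A ≤ C := by
  haveI : Nonempty (Fin M) := ⟨⟨0, hM⟩⟩
  unfold ergDelta
  exact ciSup_le fun j => ciSup_le fun i₁ => ciSup_le fun i₂ => h j i₁ i₂

lemma le_ergDelta {A : Matrix (Fin M) (Fin M) ℝ} (j i₁ i₂) :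
    |A i₁ j - A i₂ j| ≤ ergDelta A := by
  unfold ergDelta
  calc |A i₁ j - A i₂ j| ≤ ⨆ i₂, |A i₁ j - A i₂ j| := le_ciSup (f := fun i₂ => |A i₁ j - A i₂ j|) (aux_bddA _) i₂
    _ ≤ ⨆ i₁, ⨆ i₂, |A i₁ j - A i₂ j| :=
      le_ciSup (f := fun i₁ => ⨆ i₂, |A i₁ j - A i₂ j|) (aux_bddA _) i₁
    _ ≤ ⨆ j, ⨆ i₁, ⨆ i₂, |A i₁ j - A i₂ j| :=
      le_ciSup (f := fun j => ⨆ i₁, ⨆ i₂, |A i₁ j - A i₂ j|) (aux_bddA _) j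

lemma ergDelta_nonneg (hM : 0 < M) (A : Matrix (Fin M) (Fin M) ℝ) : 0 ≤ ergDelta A := by
  have := le_ergDelta (A := A) ⟨0, hM⟩ ⟨0, hM⟩ ⟨0, hM⟩
  simpa using this

lemma ergLambda_le_ergLambda_aux {A : Matrix (Fin M) (Fin M) ℝ} (i₁ i₂) :
    1 - ∑ j, min (A i₁ j) (A i₂ j) ≤ ergLambda A := by
  unfold ergLambda
  have : (⨅ i₁, ⨅ i₂, ∑ j, min (A i₁ j) (A i₂ j)) ≤ ∑ j, min (A i₁ j) (A i₂ j) :=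
    ciInf_le_of_le (aux_bddB _) i₁ (ciInf_le (aux_bddB _) i₂)
  linarith

lemma ergLambda_nonneg (hM : 0 < M) {A : Matrix (Fin M) (Fin M) ℝ}
    (hA : RowStochastic A) : 0 ≤ ergLambda A := by
  have i : Fin M := ⟨0, hM⟩
  have h := ergLambda_le_ergLambda_aux (A := A) i i
  have : ∑ j, min (A i j) (A i j) = 1 := by simp [hA.2 i]
  linarith

lemma ergLambda_le_one (hM : 0 < M) {A : Matrix (Fin M) (Fin M) ℝ}
    (hA : RowStochastic A) : ergLambda A ≤ 1 := by
  haveI : Nonempty (Fin M) := ⟨⟨0, hM⟩⟩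
  unfold ergLambda
  have : (0:ℝ) ≤ ⨅ i₁, ⨅ i₂, ∑ j, min (A i₁ j) (A i₂ j) :=
    le_ciInf fun i₁ => le_ciInf fun i₂ => Finset.sum_nonneg fun j _ =>
      le_min (hA.1 i₁ j) (hA.1 i₂ j)
  linarith

lemma RowStochastic.one (hM : 0 < M) : RowStochastic (1 : Matrix (Fin M) (Fin M) ℝ) := by
  constructor
  · intro i j
    rw [Matrix.one_apply]
    split <;> norm_num
  · intro i
    simp [Matrix.one_apply]

lemma RowStochastic.mul {A B : Matrix (Fin M) (Fin M) ℝ}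
    (hA : RowStochastic A) (hB : RowStochastic B) : RowStochastic (A * B) := by
  constructor
  · intro i j
    rw [Matrix.mul_apply]
    exact Finset.sum_nonneg fun m _ => mul_nonneg (hA.1 i m) (hB.1 m j)
  · intro i
    simp only [Matrix.mul_apply]
    rw [Finset.sum_comm]
    have : ∀ m, ∑ j, A i m * B m j = A i m := by
      intro m
      rw [← Finset.mul_sum, hB.2 m, mul_one]
    simp only [this]
    exact hA.2 i

/-- Hajnal-type contraction: `δ(AB) ≤ λ(A)·δ(B)` for row stochastic `A`. -/
lemma ergDelta_mul_le (hM : 0 < M) {A B : Matrix (Fin M) (Fin M) ℝ}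
    (hA : RowStochastic A) :
    ergDelta (A * B) ≤ ergLambda A * ergDelta B := by
  haveI : Nonempty (Fin M) := ⟨⟨0, hM⟩⟩
  have hne : (Finset.univ : Finset (Fin M)).Nonempty := Finset.univ_nonempty
  apply ergDelta_le_of hM
  intro j i₁ i₂
  set d : Fin M → ℝ := fun m => A i₁ m - A i₂ m with hd
  have hsum0 : ∑ m, d m = 0 := by
    simp [hd, Finset.sum_sub_distrib, hA.2 i₁, hA.2 i₂]
  set c1 := Finset.univ.inf' hne (fun m => B m j) with hc1
  set c2 := Finset.univ.sup' hne (fun m => B m j) with hc2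
  have hc1le : ∀ m, c1 ≤ B m j := fun m => Finset.inf'_le (f := fun m => B m j) (Finset.mem_univ m)
  have hlec2 : ∀ m, B m j ≤ c2 := fun m => Finset.le_sup' (f := fun m => B m j) (Finset.mem_univ m)
  have hosc0 : 0 ≤ c2 - c1 := by
    have := hc1le ⟨0, hM⟩; have := hlec2 ⟨0, hM⟩; linarith
  have hosc : c2 - c1 ≤ ergDelta B := by
    obtain ⟨m2, _, hm2⟩ := Finset.exists_mem_eq_sup' hne (fun m => B m j)
    obtain ⟨m1, _, hm1⟩ := Finset.exists_mem_eq_inf' hne (fun m => B m j)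
    have : c2 - c1 = B m2 j - B m1 j := by rw [hc1, hc2, hm1, hm2]
    rw [this]
    exact le_trans (le_abs_self _) (le_ergDelta j m2 m1)
  set s := ∑ m, max (d m) 0 with hs
  have hmax : ∀ m, max (d m) 0 = A i₁ m - min (A i₁ m) (A i₂ m) := by
    intro m
    rcases le_total (A i₁ m) (A i₂ m) with h | h
    · rw [min_eq_left h, max_eq_right (by simp [hd]; linarith)]
      simp
    · rw [min_eq_right h, max_eq_left (by simp [hd]; linarith)]
  have hsL : s ≤ ergLambda A := by
    have h1 : s = 1 - ∑ m, min (A i₁ m) (A i₂ m) := by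
      rw [hs]
      simp only [hmax]
      rw [Finset.sum_sub_distrib, hA.2 i₁]
    rw [h1]
    exact ergLambda_le_ergLambda_aux i₁ i₂
  have hs0 : 0 ≤ s := Finset.sum_nonneg fun m _ => le_max_right _ _
  have key : ∀ c : ℝ, ∑ m, d m * B m j = ∑ m, d m * (B m j - c) := by
    intro c
    simp only [mul_sub]
    rw [Finset.sum_sub_distrib, ← Finset.sum_mul, hsum0, zero_mul, sub_zero]
  have hupper : ∑ m, d m * B m j ≤ s * (c2 - c1) := by
    rw [key c1, hs, Finset.sum_mul]
    apply Finset.sum_le_sum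
    intro m _
    rcases le_or_gt 0 (d m) with h | h
    · rw [max_eq_left h]
      exact mul_le_mul_of_nonneg_left (by have := hlec2 m; linarith) h
    · rw [max_eq_right h.le]
      rw [zero_mul]
      exact mul_nonpos_of_nonpos_of_nonneg h.le (by have := hc1le m; linarith)
  have hlower : -(s * (c2 - c1)) ≤ ∑ m, d m * B m j := by
    rw [key c2, hs, Finset.sum_mul, ← Finset.sum_neg_distrib]
    apply Finset.sum_le_sum
    intro m _
    rcases le_or_gt 0 (d m) with h | h
    · rw [max_eq_left h]
      have : -(d m * (c2 - c1)) = d m * (c1 - c2) := by ring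
      rw [this]
      exact mul_le_mul_of_nonneg_left (by have := hc1le m; linarith) h
    · rw [max_eq_right h.le, zero_mul, neg_zero]
      nlinarith [hlec2 m]
  have habs : |∑ m, d m * B m j| ≤ s * (c2 - c1) := abs_le.2 ⟨by linarith, hupper⟩
  have heq : (A * B) i₁ j - (A * B) i₂ j = ∑ m, d m * B m j := by
    simp only [Matrix.mul_apply, hd]
    rw [← Finset.sum_sub_distrib]
    congr 1; ext m; ring
  rw [heq]
  calc |∑ m, d m * B m j| ≤ s * (c2 - c1) := habs
    _ ≤ ergLambda A * ergDelta B := by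
        apply mul_le_mul hsL hosc hosc0
        linarith [ergLambda_nonneg hM hA, hsL, hs0]

lemma ergDelta_le_one (hM : 0 < M) {A : Matrix (Fin M) (Fin M) ℝ}
    (hA : RowStochastic A) : ergDelta A ≤ 1 := by
  apply ergDelta_le_of hM
  intro j i₁ i₂
  have h1 : ∀ i, A i j ≤ 1 := by
    intro i
    calc A i j ≤ ∑ j', A i j' :=
      Finset.single_le_sum (fun j' _ => hA.1 i j') (Finset.mem_univ j)
    _ = 1 := hA.2 i
  have := hA.1 i₁ j; have := hA.1 i₂ j; have := h1 i₁; have := h1 i₂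
  rw [abs_le]; constructor <;> linarith

lemma ergDelta_le_ergLambda (hM : 0 < M) {A : Matrix (Fin M) (Fin M) ℝ}
    (hA : RowStochastic A) : ergDelta A ≤ ergLambda A := by
  have h := ergDelta_mul_le hM hA (B := 1)
  rw [mul_one] at h
  have h1 : ergDelta (1 : Matrix (Fin M) (Fin M) ℝ) ≤ 1 :=
    ergDelta_le_one hM (RowStochastic.one hM)
  have h0 := ergLambda_nonneg hM hA
  nlinarith

lemma backProd_self {Y : ℕ → Matrix (Fin M) (Fin M) ℝ} (c : ℕ) :
    backProd Y c c = Y c := by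
  simp [backProd, List.range_succ]

lemma backProd_empty {Y : ℕ → Matrix (Fin M) (Fin M) ℝ} {p q : ℕ} (h : q < p) :
    backProd Y p q = 1 := by
  simp [backProd, show q + 1 - p = 0 by omega]

lemma backProd_succ {Y : ℕ → Matrix (Fin M) (Fin M) ℝ} {p q : ℕ} (h : p ≤ q + 1) :
    backProd Y p (q + 1) = Y (q + 1) * backProd Y p q := by
  unfold backProd
  rw [show q + 1 + 1 - p = (q + 1 - p) + 1 by omega, List.range_succ]
  rw [List.map_append, List.reverse_append, List.prod_append]
  simp [show p + (q + 1 - p) = q + 1 by omega]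

lemma backProd_rowStochastic (hM : 0 < M) {Y : ℕ → Matrix (Fin M) (Fin M) ℝ} {p : ℕ} :
    ∀ q, (∀ r, p ≤ r → r ≤ q → RowStochastic (Y r)) → RowStochastic (backProd Y p q) := by
  intro q
  induction q with
  | zero =>
    intro h
    rcases Nat.eq_zero_or_pos p with hp | hp
    · subst hp; rw [backProd_self]; exact h 0 le_rfl le_rfl
    · rw [backProd_empty hp]; exact RowStochastic.one hM
  | succ q IH =>
    intro h
    rcases le_or_gt p (q+1) with hp | hp
    · rw [backProd_succ hp]
      exact RowStochastic.mul (h (q+1) hp le_rfl)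
        (IH fun r h1 h2 => h r h1 (by omega))
    · rw [backProd_empty hp]; exact RowStochastic.one hM

lemma backProd_split {Y : ℕ → Matrix (Fin M) (Fin M) ℝ} {p c : ℕ} (h1 : p ≤ c) :
    ∀ q, c ≤ q → backProd Y p q = backProd Y (c + 1) q * backProd Y p c := by
  intro q hq
  induction q, hq using Nat.le_induction with
  | base => rw [backProd_empty (Nat.lt_succ_self c), one_mul]
  | succ q hq IH =>
    rw [backProd_succ (by omega), IH, ← mul_assoc, ← backProd_succ (by omega)]

end Aux

/-- If `Y(t₀), …, Y(t)` are row stochastic and there are `k` pairwise disjoint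
intervals `[a i, b i] ⊆ [t₀, t]` of consecutive indices such that the backward
product of the `Y`'s over each interval has coefficient of ergodicity `λ` at most
`1 − γ`, then `δ(Y(t)·Y(t−1)·⋯·Y(t₀)) ≤ (1 − γ)^k`. -/
theorem ergDelta_backProd_le {M : ℕ} (hM : 0 < M)
    (Y : ℕ → Matrix (Fin M) (Fin M) ℝ) (t₀ t : ℕ) (ht : t₀ ≤ t)
    (hY : ∀ r, t₀ ≤ r → r ≤ t → RowStochastic (Y r))
    (γ : ℝ) (hγ0 : 0 < γ) (hγ1 : γ ≤ 1)
    (k : ℕ) (a b : Fin k → ℕ)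
    (hlo : ∀ i, t₀ ≤ a i) (hab : ∀ i, a i ≤ b i) (hhi : ∀ i, b i ≤ t)
    (hdisj : ∀ i j, i ≠ j → b i < a j ∨ b j < a i)
    (hblock : ∀ i, ergLambda (backProd Y (a i) (b i)) ≤ 1 - γ) :
    ergDelta (backProd Y t₀ t) ≤ (1 - γ) ^ k := by
  have hγ' : (0:ℝ) ≤ 1 - γ := by linarith
  have key : ∀ n (u : ℕ), t₀ ≤ u → u ≤ t → ∀ S : Finset (Fin k), S.card = n →
      (∀ i ∈ S, b i ≤ u) → ergDelta (backProd Y t₀ u) ≤ (1 - γ) ^ n := by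
    intro n
    induction n with
    | zero =>
      intro u hu1 hu2 S _ _
      simpa using ergDelta_le_one hM
        (backProd_rowStochastic hM u (fun r h1 h2 => hY r h1 (le_trans h2 hu2)))
    | succ n IH =>
      intro u hu1 hu2 S hcard hbu
      have hSne : S.Nonempty := Finset.card_pos.1 (by omega)
      obtain ⟨i₀, hi₀S, hi₀max⟩ := S.exists_max_image b hSne
      have hbi₀u : b i₀ ≤ u := hbu i₀ hi₀S
      have hother : ∀ j ∈ S, j ≠ i₀ → b j < a i₀ := by
        intro j hj hne
        rcases hdisj j i₀ hne with h | h
        · exact h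
        · exact absurd (le_trans (hab j) (hi₀max j hj)) (by omega)
      have hstoch : ∀ p q, t₀ ≤ p → q ≤ u → RowStochastic (backProd Y p q) := by
        intro p q hp hq
        exact backProd_rowStochastic hM q
          (fun r h1 h2 => hY r (le_trans hp h1) (le_trans h2 (le_trans hq hu2)))
      have htop : RowStochastic (backProd Y (b i₀ + 1) u) :=
        hstoch _ _ (by have := hlo i₀; have := hab i₀; omega) le_rfl
      have hblockS : RowStochastic (backProd Y (a i₀) (b i₀)) :=
        hstoch _ _ (hlo i₀) hbi₀u
      have hLtop : ergLambda (backProd Y (b i₀ + 1) u) ≤ 1 := ergLambda_le_one hM htop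
      have hLtop0 : 0 ≤ ergLambda (backProd Y (b i₀ + 1) u) := ergLambda_nonneg hM htop
      by_cases hA : a i₀ = t₀
      · -- bottom interval starts at t₀ ; then S = {i₀} and n = 0
        have hn : n = 0 := by
          by_contra hn0
          obtain ⟨j, hjS, hjne⟩ :=
            Finset.exists_mem_ne (s := S) (by omega) i₀
          have h1 := hother j hjS hjne
          have h2 := hlo j
          have h3 := hab j
          omega
        subst hn
        have hsplit : backProd Y t₀ u =
            backProd Y (b i₀ + 1) u * backProd Y t₀ (b i₀) :=
          backProd_split (by have := hab i₀; omega) u hbi₀u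
        rw [hsplit]
        have e1 := ergDelta_mul_le hM (B := backProd Y t₀ (b i₀)) htop
        have e2 : ergDelta (backProd Y t₀ (b i₀)) ≤ 1 - γ := by
          have := ergDelta_le_ergLambda hM (hA ▸ hblockS)
          have hb := hblock i₀
          rw [hA] at hb
          linarith
        have e3 : 0 ≤ ergDelta (backProd Y t₀ (b i₀)) := ergDelta_nonneg hM _
        calc ergDelta _ ≤ _ := e1
          _ ≤ (1 - γ) ^ (0 + 1) := by rw [pow_one]; nlinarith
      · have ha1 : t₀ ≤ a i₀ - 1 := by have := hlo i₀; omega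
        have hsplit1 : backProd Y t₀ u =
            backProd Y (b i₀ + 1) u * backProd Y t₀ (b i₀) :=
          backProd_split (le_trans (hlo i₀) (hab i₀)) u hbi₀u
        have hsplit2 : backProd Y t₀ (b i₀) =
            backProd Y (a i₀) (b i₀) * backProd Y t₀ (a i₀ - 1) := by
          have h := backProd_split (Y := Y) (p := t₀) (c := a i₀ - 1) ha1 (b i₀)
            (by have := hab i₀; omega)
          rwa [show a i₀ - 1 + 1 = a i₀ by have := hlo i₀; omega] at h
        have hrest : ergDelta (backProd Y t₀ (a i₀ - 1)) ≤ (1 - γ) ^ n := by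
          apply IH (a i₀ - 1) ha1 (by have := hhi i₀; have := hab i₀; omega) (S.erase i₀)
          · rw [Finset.card_erase_of_mem hi₀S, hcard]
            omega
          · intro j hj
            have hjS := Finset.mem_of_mem_erase hj
            have hne := Finset.ne_of_mem_erase hj
            have := hother j hjS hne
            omega
        rw [hsplit1, hsplit2]
        have e1 := ergDelta_mul_le hM
          (B := backProd Y (a i₀) (b i₀) * backProd Y t₀ (a i₀ - 1)) htop
        have e2 := ergDelta_mul_le hM (B := backProd Y t₀ (a i₀ - 1)) hblockS
        have hb := hblock i₀
        have hLb0 : 0 ≤ ergLambda (backProd Y (a i₀) (b i₀)) := ergLambda_nonneg hM hblockS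
        have hδr0 : 0 ≤ ergDelta (backProd Y t₀ (a i₀ - 1)) := ergDelta_nonneg hM _
        have hpow0 : (0:ℝ) ≤ (1 - γ) ^ n := pow_nonneg hγ' n
        have e3 : ergDelta (backProd Y (a i₀) (b i₀) * backProd Y t₀ (a i₀ - 1)) ≤
            (1 - γ) ^ (n + 1) := by
          calc _ ≤ _ := e2
            _ ≤ (1 - γ) ^ (n + 1) := by rw [pow_succ']; nlinarith
        have hδm0 : 0 ≤ ergDelta (backProd Y (a i₀) (b i₀) * backProd Y t₀ (a i₀ - 1)) :=
          ergDelta_nonneg hM _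
        have hpow0' : (0:ℝ) ≤ (1 - γ) ^ (n + 1) := pow_nonneg hγ' (n + 1)
        calc ergDelta _ ≤ _ := e1
          _ ≤ (1 - γ) ^ (n + 1) := by nlinarith
  have := key k t ht le_rfl Finset.univ (by simp) (fun i _ => hhi i)
  exact this
end

section
/- Let f : ℝ^d → ℝ be differentiable with L-Lipschitz gradient (L > 0) and bounded below, with f_inf := inf f. Let h > 0 satisfy Lh < 1, let S ≥ 1, and let w₀, w₁, …, w_S ∈ ℝ^d satisfy w_{s+1} = w_s − h∇f(w_s) + e_s for 0 ≤ s ≤ S−1. Suppose G, E ≥ 0 are such that ‖∇f(w_s)‖ ≤ G and ‖e_s‖ ≤ E for all 0 ≤ s ≤ S−1. Then (1 − Lh)·(1/S)·∑_{s=0}^{S−1}‖∇f(w_s)‖² ≤ (f(w₀) − f_inf)/(hS) + (G·E + L·E²)/h. -/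
open InnerProductSpace

lemma descent_lemma {d : ℕ} (L : ℝ) (hL : 0 < L)
    (f : EuclideanSpace ℝ (Fin d) → ℝ)
    (hdiff : Differentiable ℝ f)
    (hlip : ∀ x y, ‖gradient f x - gradient f y‖ ≤ L * ‖x - y‖)
    (x y : EuclideanSpace ℝ (Fin d)) :
    f y ≤ f x + inner ℝ (gradient f x) (y - x) + L * (‖y - x‖ * ‖y - x‖) := by
  have hfd : ∀ z : EuclideanSpace ℝ (Fin d),
      fderiv ℝ f z = toDual ℝ _ (gradient f z) := by
    intro z
    simp [gradient, (toDual ℝ (EuclideanSpace ℝ (Fin d))).apply_symm_apply]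
  have hnorm : ∀ z w : EuclideanSpace ℝ (Fin d),
      ‖fderiv ℝ f z - fderiv ℝ f w‖ = ‖gradient f z - gradient f w‖ := by
    intro z w
    rw [hfd, hfd, ← map_sub]
    exact (toDual ℝ (EuclideanSpace ℝ (Fin d))).norm_map _
  have key := (convex_segment x y).norm_image_sub_le_of_norm_fderiv_le'
    (f := f) (φ := fderiv ℝ f x) (C := L * ‖y - x‖)
    (fun z _ => hdiff z) ?_ (left_mem_segment ℝ x y) (right_mem_segment ℝ x y)
  · have happ : fderiv ℝ f x (y - x) = inner ℝ (gradient f x) (y - x) := by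
      rw [hfd]; rfl
    rw [happ, Real.norm_eq_abs] at key
    have := (abs_le.1 key).2
    nlinarith
  · intro z hz
    rw [hnorm]
    refine le_trans (hlip z x) ?_
    have hzx : ‖z - x‖ ≤ ‖y - x‖ := by
      rcases hz with ⟨a, b, ha, hb, hab, rfl⟩
      have : a • x + b • y - x = b • (y - x) := by
        have : a = 1 - b := by linarith
        rw [this]; module
      rw [this, norm_smul]
      simp only [Real.norm_eq_abs, abs_of_nonneg hb]
      nlinarith [norm_nonneg (y - x)]
    nlinarith

/-- Finite-horizon guarantee for inexact gradient descent on smooth functions with a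
constant step size: if `f` is differentiable with `L`-Lipschitz gradient, bounded
below with `f_inf := inf f`, `Lh < 1`, `w_{s+1} = w_s − h∇f(w_s) + e_s` for
`0 ≤ s ≤ S−1`, `‖∇f(w_s)‖ ≤ G` and `‖e_s‖ ≤ E`, then
`(1 − Lh)·(1/S)·∑_{s<S}‖∇f(w_s)‖² ≤ (f(w₀) − f_inf)/(hS) + (GE + LE²)/h`. -/
theorem inexact_gd_constant_step_bound {d : ℕ} (L h : ℝ) (hL : 0 < L) (hh0 : 0 < h)
    (hLh : L * h < 1)
    (f : EuclideanSpace ℝ (Fin d) → ℝ)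
    (hdiff : Differentiable ℝ f)
    (hlip : ∀ x y, ‖gradient f x - gradient f y‖ ≤ L * ‖x - y‖)
    (hbdd : BddBelow (Set.range f))
    (S : ℕ) (hS : 1 ≤ S)
    (w e : ℕ → EuclideanSpace ℝ (Fin d))
    (hupd : ∀ s < S, w (s + 1) = w s - h • gradient f (w s) + e s)
    (G E : ℝ) (hG : 0 ≤ G) (hE : 0 ≤ E)
    (hGb : ∀ s < S, ‖gradient f (w s)‖ ≤ G)
    (hEb : ∀ s < S, ‖e s‖ ≤ E) :
    (1 - L * h) * (1 / (S : ℝ) * ∑ s ∈ Finset.range S, ‖gradient f (w s)‖ ^ 2) ≤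
      (f (w 0) - ⨅ x, f x) / (h * (S : ℝ)) + (G * E + L * E ^ 2) / h := by
  -- per-step inequality
  have step : ∀ s < S, h * (1 - L * h) * ‖gradient f (w s)‖ ^ 2 ≤
      f (w s) - f (w (s + 1)) + (G * E + L * E ^ 2) := by
    intro s hs
    set g := gradient f (w s) with hg
    have hdesc := descent_lemma L hL f hdiff hlip (w s) (w (s + 1))
    have hdiffv : w (s + 1) - w s = -(h • g) + e s := by
      rw [hupd s hs]; abel
    have hinner : inner ℝ g (w (s + 1) - w s) = -(h * ‖g‖ ^ 2) + inner ℝ g (e s) := by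
      rw [hdiffv, inner_add_right, inner_neg_right, real_inner_smul_right,
        real_inner_self_eq_norm_sq]
      try ring
    have hnormsq : ‖w (s + 1) - w s‖ * ‖w (s + 1) - w s‖ =
        h ^ 2 * ‖g‖ ^ 2 - 2 * h * inner ℝ g (e s) + ‖e s‖ ^ 2 := by
      rw [hdiffv]
      have : -(h • g) + e s = e s - h • g := by abel
      rw [this, ← pow_two, norm_sub_sq_real, real_inner_smul_right, norm_smul]
      simp only [Real.norm_eq_abs, abs_of_nonneg hh0.le]
      rw [real_inner_comm]
      ring
    rw [hinner, hnormsq] at hdesc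
    have hip : |(inner ℝ g (e s) : ℝ)| ≤ G * E := by
      refine le_trans (abs_real_inner_le_norm g (e s)) ?_
      exact mul_le_mul (hGb s hs) (hEb s hs) (norm_nonneg _) hG
    obtain ⟨hip1, hip2⟩ := abs_le.1 hip
    have hEsq : L * ‖e s‖ ^ 2 ≤ L * E ^ 2 := by
      exact mul_le_mul_of_nonneg_left
        (pow_le_pow_left₀ (norm_nonneg _) (hEb s hs) 2) hL.le
    nlinarith [mul_nonneg (mul_pos hL hh0).le (sub_nonneg.2 hip2),
      mul_nonneg (sub_nonneg.2 hLh.le) (sub_nonneg.2 hip2),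
      mul_nonneg (mul_pos hL hh0).le (by linarith : (0:ℝ) ≤ G * E + inner ℝ g (e s))]
  -- sum up
  have hSpos : (0 : ℝ) < S := by exact_mod_cast hS
  have hsum : h * (1 - L * h) * ∑ s ∈ Finset.range S, ‖gradient f (w s)‖ ^ 2 ≤
      (f (w 0) - f (w S)) + S * (G * E + L * E ^ 2) := by
    rw [Finset.mul_sum]
    have htel : ∑ s ∈ Finset.range S, (f (w s) - f (w (s + 1))) = f (w 0) - f (w S) := by
      have := Finset.sum_range_sub' (fun s => f (w s)) S
      simpa using this
    calc ∑ s ∈ Finset.range S, h * (1 - L * h) * ‖gradient f (w s)‖ ^ 2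
        ≤ ∑ s ∈ Finset.range S, ((f (w s) - f (w (s + 1))) + (G * E + L * E ^ 2)) := by
          refine Finset.sum_le_sum fun s hs => step s (Finset.mem_range.1 hs)
      _ = (f (w 0) - f (w S)) + S * (G * E + L * E ^ 2) := by
          rw [Finset.sum_add_distrib, htel, Finset.sum_const, Finset.card_range,
            nsmul_eq_mul]
  have hinf : (⨅ x, f x) ≤ f (w S) := ciInf_le hbdd (w S)
  have key : h * (1 - L * h) * ∑ s ∈ Finset.range S, ‖gradient f (w s)‖ ^ 2 ≤
      (f (w 0) - ⨅ x, f x) + S * (G * E + L * E ^ 2) := by linarith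
  have hhS : (0 : ℝ) < h * S := mul_pos hh0 hSpos
  calc (1 - L * h) * (1 / (S : ℝ) * ∑ s ∈ Finset.range S, ‖gradient f (w s)‖ ^ 2)
      = (h * (1 - L * h) * ∑ s ∈ Finset.range S, ‖gradient f (w s)‖ ^ 2) / (h * S) := by
        field_simp
    _ ≤ ((f (w 0) - ⨅ x, f x) + S * (G * E + L * E ^ 2)) / (h * S) := by
        exact div_le_div_of_nonneg_right key hhS.le |>.trans_eq rfl
    _ = (f (w 0) - ⨅ x, f x) / (h * (S : ℝ)) + (G * E + L * E ^ 2) / h := by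
        field_simp
end

section
/- Let f : ℝ^d → ℝ be differentiable with L-Lipschitz gradient (L > 0) and bounded below. Let S ≥ 1 and let w₀, …, w_S ∈ ℝ^d satisfy w_{s+1} = w_s − h_s∇f(w_s) + e_s for 0 ≤ s ≤ S−1, where the step sizes satisfy 0 < h_s ≤ 1/(2L). Suppose G ≥ 0 is such that ‖∇f(w_s)‖ ≤ G for all 0 ≤ s ≤ S−1. Then (1/2)·(min_{0 ≤ s ≤ S−1}‖∇f(w_s)‖²)·∑_{s=0}^{S−1} h_s ≤ f(w₀) − inf f + ∑_{s=0}^{S−1}(G·‖e_s‖ + L·‖e_s‖²). -/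
set_option maxHeartbeats 1000000

open scoped RealInnerProductSpace

lemma descent_lemma' {F : Type*} [NormedAddCommGroup F] [InnerProductSpace ℝ F] [CompleteSpace F]
    {f : F → ℝ} {L : ℝ} (hdiff : Differentiable ℝ f)
    (hlip : ∀ x y, ‖gradient f x - gradient f y‖ ≤ L * ‖x - y‖) (x v : F) :
    f (x + v) ≤ f x + ⟪gradient f x, v⟫ + L / 2 * ‖v‖ ^ 2 := by
  set φ : ℝ → ℝ := fun t => f (x + t • v) - t * ⟪gradient f x, v⟫ - L / 2 * t ^ 2 * ‖v‖ ^ 2 with hφ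
  have hline : ∀ t : ℝ, HasDerivAt (fun t : ℝ => x + t • v) v t := fun t => by
    simpa using ((hasDerivAt_id t).smul_const v).const_add x
  have hfd : ∀ t : ℝ, HasDerivAt (fun t => f (x + t • v))
      ⟪gradient f (x + t • v), v⟫ t := by
    intro t
    have h1 := ((hdiff (x + t • v)).hasGradientAt.hasFDerivAt).comp_hasDerivAt t (hline t)
    exact h1
  have hφd : ∀ t : ℝ, HasDerivAt φ
      (⟪gradient f (x + t • v), v⟫ - ⟪gradient f x, v⟫ - L * t * ‖v‖ ^ 2) t := by
    intro t
    have h2 : HasDerivAt (fun t : ℝ => t * ⟪gradient f x, v⟫) ⟪gradient f x, v⟫ t := by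
      simpa using (hasDerivAt_id t).mul_const _
    have h3 : HasDerivAt (fun t : ℝ => L / 2 * t ^ 2 * ‖v‖ ^ 2) (L * t * ‖v‖ ^ 2) t := by
      have := ((hasDerivAt_pow 2 t).const_mul (L / 2)).mul_const (‖v‖ ^ 2)
      refine this.congr_deriv ?_
      ring
    exact ((hfd t).sub h2).sub h3
  have key : φ 1 ≤ φ 0 := by
    have hanti : AntitoneOn φ (Set.Icc 0 1) := by
      apply antitoneOn_of_deriv_nonpos (convex_Icc 0 1)
      · exact (Differentiable.continuous (fun t => (hφd t).differentiableAt)).continuousOn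
      · exact fun t _ => ((hφd t).differentiableAt).differentiableWithinAt
      · intro t ht
        rw [interior_Icc] at ht
        rw [(hφd t).deriv]
        have h4 : ⟪gradient f (x + t • v) - gradient f x, v⟫ ≤ L * t * ‖v‖ ^ 2 := by
          calc ⟪gradient f (x + t • v) - gradient f x, v⟫
              ≤ ‖gradient f (x + t • v) - gradient f x‖ * ‖v‖ := real_inner_le_norm _ _
            _ ≤ (L * ‖(x + t • v) - x‖) * ‖v‖ :=
                mul_le_mul_of_nonneg_right (hlip _ _) (norm_nonneg _)
            _ = L * t * ‖v‖ ^ 2 := by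
                simp [norm_smul, abs_of_pos ht.1]; ring
        rw [inner_sub_left] at h4
        linarith
    exact hanti (by norm_num) (by norm_num) (by norm_num)
  simp only [hφ] at key
  simp at key
  have hgi : ⟪gradient f x, v⟫ = fderiv ℝ f x v := by simp
  linarith

/-- Finite-horizon guarantee for inexact gradient descent with diminishing step
sizes: if `f` is differentiable with `L`-Lipschitz gradient and bounded below,
`w_{s+1} = w_s − h_s∇f(w_s) + e_s` with `0 < h_s ≤ 1/(2L)` for `0 ≤ s ≤ S−1`, and
`‖∇f(w_s)‖ ≤ G`, then
`(1/2)·(min_{s<S}‖∇f(w_s)‖²)·∑_{s<S} h_s ≤ f(w₀) − inf f + ∑_{s<S}(G‖e_s‖ + L‖e_s‖²)`. -/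
theorem inexact_gd_diminishing_step_bound {d : ℕ} (L : ℝ) (hL : 0 < L)
    (f : EuclideanSpace ℝ (Fin d) → ℝ)
    (hdiff : Differentiable ℝ f)
    (hlip : ∀ x y, ‖gradient f x - gradient f y‖ ≤ L * ‖x - y‖)
    (hbdd : BddBelow (Set.range f))
    (S : ℕ) (hS : 1 ≤ S)
    (w e : ℕ → EuclideanSpace ℝ (Fin d)) (h : ℕ → ℝ)
    (hstep : ∀ s < S, 0 < h s ∧ h s ≤ 1 / (2 * L))
    (hupd : ∀ s < S, w (s + 1) = w s - h s • gradient f (w s) + e s)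
    (G : ℝ) (hG : 0 ≤ G) (hGb : ∀ s < S, ‖gradient f (w s)‖ ≤ G) :
    1 / 2 * (⨅ s : Fin S, ‖gradient f (w s)‖ ^ 2) * (∑ s ∈ Finset.range S, h s) ≤
      f (w 0) - (⨅ x, f x) + ∑ s ∈ Finset.range S, (G * ‖e s‖ + L * ‖e s‖ ^ 2) := by
  have hNe : Nonempty (Fin S) := ⟨⟨0, hS⟩⟩
  -- per-step bound
  have step : ∀ s < S, 1 / 2 * h s * ‖gradient f (w s)‖ ^ 2 ≤
      f (w s) - f (w (s + 1)) + (G * ‖e s‖ + L * ‖e s‖ ^ 2) := by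
    intro s hsS
    set g := gradient f (w s) with hg
    set v := -(h s • g) + e s with hv
    have hwv : w (s + 1) = w s + v := by rw [hupd s hsS, hv]; module
    have hd := descent_lemma' hdiff hlip (w s) v
    rw [← hwv] at hd
    have hinner : ⟪g, v⟫ ≤ -(h s * ‖g‖ ^ 2) + G * ‖e s‖ := by
      rw [hv, inner_add_right, inner_neg_right, real_inner_smul_right, real_inner_self_eq_norm_sq]
      have h1 : ⟪g, e s⟫ ≤ ‖g‖ * ‖e s‖ := real_inner_le_norm _ _
      have h2 : ‖g‖ * ‖e s‖ ≤ G * ‖e s‖ :=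
        mul_le_mul_of_nonneg_right (hGb s hsS) (norm_nonneg _)
      nlinarith [sq_nonneg ‖g‖]
    have hnv : ‖v‖ ^ 2 ≤ 2 * (h s ^ 2 * ‖g‖ ^ 2) + 2 * ‖e s‖ ^ 2 := by
      have h1 : ‖v‖ ≤ h s * ‖g‖ + ‖e s‖ := by
        calc ‖v‖ ≤ ‖-(h s • g)‖ + ‖e s‖ := norm_add_le _ _
          _ = |h s| * ‖g‖ + ‖e s‖ := by rw [norm_neg, norm_smul]; rfl
          _ = h s * ‖g‖ + ‖e s‖ := by rw [abs_of_pos (hstep s hsS).1]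
      nlinarith [norm_nonneg v, norm_nonneg (e s), norm_nonneg g, (hstep s hsS).1,
        sq_nonneg (h s * ‖g‖ - ‖e s‖)]
    have hLh : L * h s ≤ 1 / 2 := by
      have h1 := (hstep s hsS).2
      rw [le_div_iff₀ (by positivity : (0:ℝ) < 2 * L)] at h1
      nlinarith
    have hq : L / 2 * ‖v‖ ^ 2 ≤ h s / 2 * ‖g‖ ^ 2 + L * ‖e s‖ ^ 2 := by
      have : L / 2 * ‖v‖ ^ 2 ≤ L * (h s ^ 2 * ‖g‖ ^ 2) + L * ‖e s‖ ^ 2 := by nlinarith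
      have h2 : L * (h s ^ 2 * ‖g‖ ^ 2) ≤ h s / 2 * ‖g‖ ^ 2 := by
        have := mul_le_mul_of_nonneg_right hLh
          (mul_nonneg (hstep s hsS).1.le (sq_nonneg ‖g‖) : 0 ≤ h s * ‖g‖ ^ 2)
        nlinarith
      linarith
    rw [← hg] at hd
    linarith
  -- infimum of gradient norms
  set m := ⨅ s : Fin S, ‖gradient f (w s)‖ ^ 2 with hm
  have hm_le : ∀ s : Fin S, m ≤ ‖gradient f (w (s : ℕ))‖ ^ 2 := fun s =>
    ciInf_le (Finite.bddBelow_range _) s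
  have hm0 : 0 ≤ m := le_ciInf fun s => sq_nonneg _
  -- sum bound
  have hsum : ∑ s ∈ Finset.range S, 1 / 2 * m * h s ≤
      ∑ s ∈ Finset.range S, (f (w s) - f (w (s + 1)) + (G * ‖e s‖ + L * ‖e s‖ ^ 2)) := by
    apply Finset.sum_le_sum
    intro s hs
    rw [Finset.mem_range] at hs
    have h1 := step s hs
    have h2 : 1 / 2 * m * h s ≤ 1 / 2 * h s * ‖gradient f (w s)‖ ^ 2 := by
      have := hm_le ⟨s, hs⟩
      simp only at this
      nlinarith [(hstep s hs).1]
    linarith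
  rw [Finset.sum_add_distrib, Finset.sum_range_sub' (fun s => f (w s))] at hsum
  have hinf : (⨅ x, f x) ≤ f (w S) := ciInf_le hbdd _
  have hlhs : 1 / 2 * m * (∑ s ∈ Finset.range S, h s) = ∑ s ∈ Finset.range S, 1 / 2 * m * h s := by
    rw [Finset.mul_sum]
  linarith [hsum, hinf, hlhs.le, hlhs.ge]
end
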